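/- With the notation of the CB-NOMA model, the conditional average minimal transmit power diverges as the correlation threshold vanishes: the function t ↦ E_t[P_min] = ∫_t^1 ∫_0^∞ ∫_0^∞ P_min(x,y,z)·g(x)·g(y)·b_t(z) dx dy dz tends to +∞ as t → 0 from the right. -/

import Mathlib

open MeasureTheory Set Filter


noncomputable def cbP (M : ℕ) (β1 β2 γ1 γ2 t z y x : ℝ) : ℝ :=
  (γ1 * (1 + γ2) / (β1 * x) + γ2 / min (β1 * x) (β2 * y * z))
    * (x ^ (M - 1) * Real.exp (-x) / (Nat.factorial (M - 1) : ℝ))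
    * (y ^ (M - 1) * Real.exp (-y) / (Nat.factorial (M - 1) : ℝ))
    * (((M : ℝ) - 1) * (1 - z) ^ (M - 2) / (1 - t) ^ (M - 1))

noncomputable def cbI1 (M : ℕ) (β1 β2 γ1 γ2 t z y : ℝ) : ℝ :=
  ∫ x in Ioi (0:ℝ), cbP M β1 β2 γ1 γ2 t z y x

lemma integrableOn_pow_mul_exp_neg (k : ℕ) :
    IntegrableOn (fun x => x ^ k * Real.exp (-x)) (Ioi (0:ℝ)) := by
  have h := Real.GammaIntegral_convergent (show (0:ℝ) < k + 1 by positivity)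
  simpa [add_sub_cancel_right, Real.rpow_natCast, mul_comm] using h

lemma integral_pow_mul_exp_neg (k : ℕ) :
    ∫ x in Ioi (0:ℝ), x ^ k * Real.exp (-x) = (k.factorial : ℝ) := by
  have h := Real.Gamma_nat_eq_factorial k
  rw [Real.Gamma_eq_integral (show (0:ℝ) < k + 1 by positivity)] at h
  rw [← h]
  refine setIntegral_congr_fun measurableSet_Ioi fun x hx => ?_
  rw [add_sub_cancel_right, Real.rpow_natCast, mul_comm]

lemma cbP_bounds (M : ℕ) (hM : 2 ≤ M) (β1 β2 γ1 γ2 t z y x : ℝ)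
    (hβ : β2 ≤ β1) (hβ2 : 0 < β2) (hγ1 : 0 < γ1) (hγ2 : 0 < γ2)
    (ht0 : 0 ≤ t) (ht1 : t < 1) (hz0 : 0 < z) (hz1 : z ≤ 1) (hy : 0 < y) (hx : 0 < x) :
    0 ≤ cbP M β1 β2 γ1 γ2 t z y x ∧
    (γ2 / (β2 * z) * (((M : ℝ) - 1) * (1 - z) ^ (M - 2) / (1 - t) ^ (M - 1))
        / (Nat.factorial (M - 1) : ℝ) / (Nat.factorial (M - 1) : ℝ)
        * (y ^ (M - 2) * Real.exp (-y))) * (x ^ (M - 1) * Real.exp (-x))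
      ≤ cbP M β1 β2 γ1 γ2 t z y x ∧
    cbP M β1 β2 γ1 γ2 t z y x ≤
      ((γ1 * (1 + γ2) + γ2) / β1 * (((M : ℝ) - 1) * (1 - z) ^ (M - 2) / (1 - t) ^ (M - 1))
        / (Nat.factorial (M - 1) : ℝ) / (Nat.factorial (M - 1) : ℝ)
        * (y ^ (M - 1) * Real.exp (-y))) * (x ^ (M - 2) * Real.exp (-x))
      + (γ2 / (β2 * z) * (((M : ℝ) - 1) * (1 - z) ^ (M - 2) / (1 - t) ^ (M - 1))
        / (Nat.factorial (M - 1) : ℝ) / (Nat.factorial (M - 1) : ℝ)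
        * (y ^ (M - 2) * Real.exp (-y))) * (x ^ (M - 1) * Real.exp (-x)) := by
  have hβ1 : 0 < β1 := hβ2.trans_le hβ
  have hM2 : (2:ℝ) ≤ (M:ℝ) := by exact_mod_cast hM
  have hCf : (0:ℝ) < (Nat.factorial (M - 1) : ℝ) := by positivity
  have h1z : 0 ≤ 1 - z := by linarith
  have h1t : 0 < 1 - t := by linarith
  have hD : 0 ≤ ((M : ℝ) - 1) * (1 - z) ^ (M - 2) / (1 - t) ^ (M - 1) := by
    apply div_nonneg (mul_nonneg (by linarith) (pow_nonneg h1z _)) (pow_nonneg h1t.le _)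
  have hmin : 0 < min (β1 * x) (β2 * y * z) := lt_min (by positivity) (by positivity)
  have hGx : (0:ℝ) ≤ x ^ (M - 1) * Real.exp (-x) / (Nat.factorial (M - 1) : ℝ) := by positivity
  have hGy : (0:ℝ) ≤ y ^ (M - 1) * Real.exp (-y) / (Nat.factorial (M - 1) : ℝ) := by positivity
  have hy' : y ^ (M - 1) = y ^ (M - 2) * y := by
    rw [show M - 1 = (M - 2) + 1 from by omega, pow_succ]
  have hx' : x ^ (M - 1) = x ^ (M - 2) * x := by
    rw [show M - 1 = (M - 2) + 1 from by omega, pow_succ]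
  refine ⟨?_, ?_, ?_⟩
  · exact mul_nonneg (mul_nonneg (mul_nonneg
      (add_nonneg (by positivity) (div_pos hγ2 hmin).le) hGx) hGy) hD
  · have h1 : γ2 / (β2 * y * z) ≤ γ1 * (1 + γ2) / (β1 * x) + γ2 / min (β1 * x) (β2 * y * z) := by
      have h2 := div_le_div_of_nonneg_left hγ2.le hmin (min_le_right (β1 * x) (β2 * y * z))
      have h3 : (0:ℝ) ≤ γ1 * (1 + γ2) / (β1 * x) := by positivity
      linarith
    have h4 : γ2 / (β2 * y * z)
          * (x ^ (M - 1) * Real.exp (-x) / (Nat.factorial (M - 1) : ℝ))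
          * (y ^ (M - 1) * Real.exp (-y) / (Nat.factorial (M - 1) : ℝ))
          * (((M : ℝ) - 1) * (1 - z) ^ (M - 2) / (1 - t) ^ (M - 1))
        ≤ cbP M β1 β2 γ1 γ2 t z y x := by
      unfold cbP
      exact mul_le_mul_of_nonneg_right (mul_le_mul_of_nonneg_right
        (mul_le_mul_of_nonneg_right h1 hGx) hGy) hD
    refine le_trans (le_of_eq ?_) h4
    rw [hy']
    field_simp
  · have h1 : γ2 / min (β1 * x) (β2 * y * z) ≤ γ2 / (β1 * x) + γ2 / (β2 * y * z) := by
      rcases min_cases (β1 * x) (β2 * y * z) with ⟨h, _⟩ | ⟨h, _⟩ <;> rw [h]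
      · exact le_add_of_nonneg_right (by positivity)
      · exact le_add_of_nonneg_left (by positivity)
    have h4 : cbP M β1 β2 γ1 γ2 t z y x ≤
        (γ1 * (1 + γ2) / (β1 * x) + (γ2 / (β1 * x) + γ2 / (β2 * y * z)))
          * (x ^ (M - 1) * Real.exp (-x) / (Nat.factorial (M - 1) : ℝ))
          * (y ^ (M - 1) * Real.exp (-y) / (Nat.factorial (M - 1) : ℝ))
          * (((M : ℝ) - 1) * (1 - z) ^ (M - 2) / (1 - t) ^ (M - 1)) := by
      unfold cbP
      exact mul_le_mul_of_nonneg_right (mul_le_mul_of_nonneg_right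
        (mul_le_mul_of_nonneg_right (add_le_add_right h1 _) hGx) hGy) hD
    refine h4.trans (le_of_eq ?_)
    rw [hy', hx']
    field_simp
    ring

lemma cbI1_props (M : ℕ) (hM : 2 ≤ M) (β1 β2 γ1 γ2 t z y : ℝ)
    (hβ : β2 ≤ β1) (hβ2 : 0 < β2) (hγ1 : 0 < γ1) (hγ2 : 0 < γ2)
    (ht0 : 0 ≤ t) (ht1 : t < 1) (hz0 : 0 < z) (hz1 : z ≤ 1) (hy : 0 < y) :
    IntegrableOn (fun x => cbP M β1 β2 γ1 γ2 t z y x) (Ioi (0:ℝ)) ∧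
    0 ≤ cbI1 M β1 β2 γ1 γ2 t z y ∧
    γ2 / (β2 * z) * (((M : ℝ) - 1) * (1 - z) ^ (M - 2) / (1 - t) ^ (M - 1))
        / (Nat.factorial (M - 1) : ℝ) * (y ^ (M - 2) * Real.exp (-y))
      ≤ cbI1 M β1 β2 γ1 γ2 t z y ∧
    cbI1 M β1 β2 γ1 γ2 t z y ≤
      ((γ1 * (1 + γ2) + γ2) / β1 * (((M : ℝ) - 1) * (1 - z) ^ (M - 2) / (1 - t) ^ (M - 1))
        / (Nat.factorial (M - 1) : ℝ) / (Nat.factorial (M - 1) : ℝ) * (Nat.factorial (M - 2) : ℝ))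
        * (y ^ (M - 1) * Real.exp (-y))
      + (γ2 / (β2 * z) * (((M : ℝ) - 1) * (1 - z) ^ (M - 2) / (1 - t) ^ (M - 1))
        / (Nat.factorial (M - 1) : ℝ)) * (y ^ (M - 2) * Real.exp (-y)) := by
  have hβ1 : 0 < β1 := hβ2.trans_le hβ
  have hM2 : (2:ℝ) ≤ (M:ℝ) := by exact_mod_cast hM
  have hCf : (0:ℝ) < (Nat.factorial (M - 1) : ℝ) := by positivity
  have h1z : 0 ≤ 1 - z := by linarith
  have h1t : 0 < 1 - t := by linarith
  have hD : 0 ≤ ((M : ℝ) - 1) * (1 - z) ^ (M - 2) / (1 - t) ^ (M - 1) := by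
    apply div_nonneg (mul_nonneg (by linarith) (pow_nonneg h1z _)) (pow_nonneg h1t.le _)
  have hmeasx : Measurable fun x => cbP M β1 β2 γ1 γ2 t z y x := by unfold cbP; fun_prop
  have hb := fun x (hx : x ∈ Ioi (0:ℝ)) =>
    cbP_bounds M hM β1 β2 γ1 γ2 t z y x hβ hβ2 hγ1 hγ2 ht0 ht1 hz0 hz1 hy hx
  set C1y : ℝ := (γ1 * (1 + γ2) + γ2) / β1
      * (((M : ℝ) - 1) * (1 - z) ^ (M - 2) / (1 - t) ^ (M - 1))
      / (Nat.factorial (M - 1) : ℝ) / (Nat.factorial (M - 1) : ℝ)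
      * (y ^ (M - 1) * Real.exp (-y)) with hC1y
  set C2y : ℝ := γ2 / (β2 * z) * (((M : ℝ) - 1) * (1 - z) ^ (M - 2) / (1 - t) ^ (M - 1))
      / (Nat.factorial (M - 1) : ℝ) / (Nat.factorial (M - 1) : ℝ)
      * (y ^ (M - 2) * Real.exp (-y)) with hC2y
  have hC2ynn : 0 ≤ C2y := by
    apply mul_nonneg (div_nonneg (div_nonneg (mul_nonneg (by positivity) hD) hCf.le) hCf.le)
    positivity
  have hu : IntegrableOn
      (fun x => C1y * (x ^ (M - 2) * Real.exp (-x)) + C2y * (x ^ (M - 1) * Real.exp (-x)))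
      (Ioi (0:ℝ)) :=
    ((integrableOn_pow_mul_exp_neg (M - 2)).const_mul _).add
      ((integrableOn_pow_mul_exp_neg (M - 1)).const_mul _)
  have hint : IntegrableOn (fun x => cbP M β1 β2 γ1 γ2 t z y x) (Ioi (0:ℝ)) := by
    refine Integrable.mono' hu hmeasx.aestronglyMeasurable ?_
    refine (ae_restrict_iff' measurableSet_Ioi).mpr (ae_of_all _ fun x hx => ?_)
    rw [Real.norm_eq_abs, abs_of_nonneg (hb x hx).1]
    exact (hb x hx).2.2
  have hnn : 0 ≤ cbI1 M β1 β2 γ1 γ2 t z y :=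
    setIntegral_nonneg measurableSet_Ioi fun x hx => (hb x hx).1
  refine ⟨hint, hnn, ?_, ?_⟩
  · have hmono : ∫ x in Ioi (0:ℝ), C2y * (x ^ (M - 1) * Real.exp (-x))
        ≤ cbI1 M β1 β2 γ1 γ2 t z y := by
      refine integral_mono_of_nonneg ?_ hint ?_
      · exact (ae_restrict_iff' measurableSet_Ioi).mpr <| ae_of_all _ fun x hx => mul_nonneg hC2ynn (mul_nonneg (pow_nonneg (le_of_lt (mem_Ioi.mp hx)) _) (Real.exp_pos _).le)
      · exact (ae_restrict_iff' measurableSet_Ioi).mpr <| ae_of_all _ fun x hx => (hb x hx).2.1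
    rw [integral_const_mul, integral_pow_mul_exp_neg] at hmono
    refine le_trans (le_of_eq ?_) hmono
    rw [hC2y]
    field_simp
  · have hmono : cbI1 M β1 β2 γ1 γ2 t z y ≤
        ∫ x in Ioi (0:ℝ), (C1y * (x ^ (M - 2) * Real.exp (-x))
          + C2y * (x ^ (M - 1) * Real.exp (-x))) := by
      refine integral_mono_of_nonneg ?_ hu ?_
      · exact (ae_restrict_iff' measurableSet_Ioi).mpr <| ae_of_all _ fun x hx => (hb x hx).1
      · exact (ae_restrict_iff' measurableSet_Ioi).mpr <| ae_of_all _ fun x hx => (hb x hx).2.2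
    rw [integral_add (((integrableOn_pow_mul_exp_neg (M - 2)).const_mul _))
        (((integrableOn_pow_mul_exp_neg (M - 1)).const_mul _)),
      integral_const_mul, integral_const_mul, integral_pow_mul_exp_neg,
      integral_pow_mul_exp_neg] at hmono
    refine hmono.trans (le_of_eq ?_)
    rw [hC1y, hC2y]
    field_simp

noncomputable def cbI2 (M : ℕ) (β1 β2 γ1 γ2 t z : ℝ) : ℝ :=
  ∫ y in Ioi (0:ℝ), cbI1 M β1 β2 γ1 γ2 t z y

lemma cbP_measurable (M : ℕ) (β1 β2 γ1 γ2 t : ℝ) :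
    Measurable (Function.uncurry fun (p : ℝ × ℝ) (x : ℝ) => cbP M β1 β2 γ1 γ2 t p.1 p.2 x) := by
  unfold cbP Function.uncurry
  fun_prop

lemma cbI1_sm (M : ℕ) (β1 β2 γ1 γ2 t : ℝ) :
    StronglyMeasurable (fun p : ℝ × ℝ => cbI1 M β1 β2 γ1 γ2 t p.1 p.2) :=
  StronglyMeasurable.integral_prod_right (ν := volume.restrict (Ioi (0:ℝ)))
    (cbP_measurable M β1 β2 γ1 γ2 t).stronglyMeasurable

lemma cbI2_sm (M : ℕ) (β1 β2 γ1 γ2 t : ℝ) :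
    StronglyMeasurable (fun z : ℝ => cbI2 M β1 β2 γ1 γ2 t z) :=
  StronglyMeasurable.integral_prod_right (ν := volume.restrict (Ioi (0:ℝ)))
    (cbI1_sm M β1 β2 γ1 γ2 t)

lemma cbnoma_key (M : ℕ) (hM : 2 ≤ M) (β1 β2 γ1 γ2 t : ℝ)
    (hβ : β2 ≤ β1) (hβ2 : 0 < β2) (hγ1 : 0 < γ1) (hγ2 : 0 < γ2)
    (ht0 : 0 < t) (ht2 : t < 1/2) :
    γ2 * (Nat.factorial (M - 2) : ℝ) / (β2 * (Nat.factorial (M - 1) : ℝ)) * ((M:ℝ) - 1)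
        * (1/2 : ℝ) ^ (M - 2) * (Real.log (1/2) - Real.log t)
      ≤ ∫ z in t..1, cbI2 M β1 β2 γ1 γ2 t z := by
  have hβ1 : 0 < β1 := hβ2.trans_le hβ
  have hM2 : (2:ℝ) ≤ (M:ℝ) := by exact_mod_cast hM
  have hMR : (0:ℝ) ≤ (M:ℝ) - 1 := by linarith
  have hCf : (0:ℝ) < (Nat.factorial (M - 1) : ℝ) := by positivity
  have hc2 : (0:ℝ) < (Nat.factorial (M - 2) : ℝ) := by positivity
  have ht1 : t < 1 := by linarith
  have h1t : 0 < 1 - t := by linarith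
  have hprops := fun z (hz : z ∈ Icc t 1) y (hy : y ∈ Ioi (0:ℝ)) =>
    cbI1_props M hM β1 β2 γ1 γ2 t z y hβ hβ2 hγ1 hγ2 ht0.le ht1
      (lt_of_lt_of_le ht0 hz.1) hz.2 (mem_Ioi.mp hy)
  -- bounds on D z
  have hDnn : ∀ z ∈ Icc t 1, 0 ≤ ((M:ℝ) - 1) * (1 - z) ^ (M - 2) / (1 - t) ^ (M - 1) :=
    fun z hz => div_nonneg (mul_nonneg hMR (pow_nonneg (by linarith [hz.2]) _))
      (pow_nonneg h1t.le _)
  have hDle : ∀ z ∈ Icc t 1, ((M:ℝ) - 1) * (1 - z) ^ (M - 2) / (1 - t) ^ (M - 1)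
      ≤ ((M:ℝ) - 1) * 1 / (1 - t) ^ (M - 1) := by
    intro z hz
    refine (div_le_div_iff_of_pos_right (pow_pos h1t _)).mpr ?_
    exact mul_le_mul_of_nonneg_left
      (pow_le_one₀ (by linarith [hz.2]) (by linarith [lt_of_lt_of_le ht0 hz.1])) hMR
  -- integrability in y
  have hyint : ∀ z ∈ Icc t 1, IntegrableOn (fun y => cbI1 M β1 β2 γ1 γ2 t z y) (Ioi (0:ℝ)) := by
    intro z hz
    refine Integrable.mono'
      (((integrableOn_pow_mul_exp_neg (M - 1)).const_mul
          ((γ1 * (1 + γ2) + γ2) / β1 * (((M:ℝ) - 1) * (1 - z) ^ (M - 2) / (1 - t) ^ (M - 1))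
            / (Nat.factorial (M - 1) : ℝ) / (Nat.factorial (M - 1) : ℝ)
            * (Nat.factorial (M - 2) : ℝ))).add
        ((integrableOn_pow_mul_exp_neg (M - 2)).const_mul
          (γ2 / (β2 * z) * (((M:ℝ) - 1) * (1 - z) ^ (M - 2) / (1 - t) ^ (M - 1))
            / (Nat.factorial (M - 1) : ℝ))))
      ((cbI1_sm M β1 β2 γ1 γ2 t).comp_measurable
        (measurable_const.prodMk measurable_id)).aestronglyMeasurable ?_
    refine (ae_restrict_iff' measurableSet_Ioi).mpr (ae_of_all _ fun y hy => ?_)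
    rw [Real.norm_eq_abs, abs_of_nonneg (hprops z hz y hy).2.1]
    exact (hprops z hz y hy).2.2.2
  -- lower bound for cbI2
  have hI2low : ∀ z ∈ Icc t 1,
      γ2 * (Nat.factorial (M - 2) : ℝ) / (β2 * (Nat.factorial (M - 1) : ℝ)) * ((M:ℝ) - 1)
          / (1 - t) ^ (M - 1) * ((1 - z) ^ (M - 2) / z) ≤ cbI2 M β1 β2 γ1 γ2 t z := by
    intro z hz
    have hz0 : 0 < z := lt_of_lt_of_le ht0 hz.1
    have hmono : ∫ y in Ioi (0:ℝ),
        (γ2 / (β2 * z) * (((M:ℝ) - 1) * (1 - z) ^ (M - 2) / (1 - t) ^ (M - 1))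
          / (Nat.factorial (M - 1) : ℝ)) * (y ^ (M - 2) * Real.exp (-y))
        ≤ cbI2 M β1 β2 γ1 γ2 t z := by
      refine integral_mono_of_nonneg ?_ (hyint z hz) ?_
      · refine (ae_restrict_iff' measurableSet_Ioi).mpr (ae_of_all _ fun y hy => ?_)
        exact mul_nonneg (div_nonneg (mul_nonneg (by positivity) (hDnn z hz)) hCf.le)
          (mul_nonneg (pow_nonneg (le_of_lt (mem_Ioi.mp hy)) _) (Real.exp_pos _).le)
      · refine (ae_restrict_iff' measurableSet_Ioi).mpr (ae_of_all _ fun y hy => ?_)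
        exact (hprops z hz y hy).2.2.1
    rw [integral_const_mul, integral_pow_mul_exp_neg] at hmono
    refine le_trans (le_of_eq ?_) hmono
    field_simp
  -- upper bound for cbI2
  have hI2up : ∀ z ∈ Icc t 1, cbI2 M β1 β2 γ1 γ2 t z ≤
      ((γ1 * (1 + γ2) + γ2) / β1 * (((M:ℝ) - 1) * 1 / (1 - t) ^ (M - 1))
          / (Nat.factorial (M - 1) : ℝ) / (Nat.factorial (M - 1) : ℝ)
          * (Nat.factorial (M - 2) : ℝ)) * (Nat.factorial (M - 1) : ℝ)
        + (γ2 / (β2 * t) * (((M:ℝ) - 1) * 1 / (1 - t) ^ (M - 1))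
          / (Nat.factorial (M - 1) : ℝ)) * (Nat.factorial (M - 2) : ℝ) := by
    intro z hz
    have hz0 : 0 < z := lt_of_lt_of_le ht0 hz.1
    have hmono : cbI2 M β1 β2 γ1 γ2 t z ≤ ∫ y in Ioi (0:ℝ),
        (((γ1 * (1 + γ2) + γ2) / β1 * (((M:ℝ) - 1) * (1 - z) ^ (M - 2) / (1 - t) ^ (M - 1))
            / (Nat.factorial (M - 1) : ℝ) / (Nat.factorial (M - 1) : ℝ)
            * (Nat.factorial (M - 2) : ℝ)) * (y ^ (M - 1) * Real.exp (-y))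
          + (γ2 / (β2 * z) * (((M:ℝ) - 1) * (1 - z) ^ (M - 2) / (1 - t) ^ (M - 1))
            / (Nat.factorial (M - 1) : ℝ)) * (y ^ (M - 2) * Real.exp (-y))) := by
      refine integral_mono_of_nonneg ?_
        (((integrableOn_pow_mul_exp_neg (M - 1)).const_mul _).add
          ((integrableOn_pow_mul_exp_neg (M - 2)).const_mul _)) ?_
      · refine (ae_restrict_iff' measurableSet_Ioi).mpr (ae_of_all _ fun y hy => ?_)
        exact (hprops z hz y hy).2.1
      · refine (ae_restrict_iff' measurableSet_Ioi).mpr (ae_of_all _ fun y hy => ?_)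
        exact (hprops z hz y hy).2.2.2
    rw [integral_add ((integrableOn_pow_mul_exp_neg (M - 1)).const_mul _)
        ((integrableOn_pow_mul_exp_neg (M - 2)).const_mul _),
      integral_const_mul, integral_const_mul, integral_pow_mul_exp_neg,
      integral_pow_mul_exp_neg] at hmono
    refine hmono.trans (add_le_add ?_ ?_)
    · refine mul_le_mul_of_nonneg_right ?_ hCf.le
      refine mul_le_mul_of_nonneg_right ?_ hc2.le
      refine div_le_div_of_nonneg_right ?_ hCf.le
      refine div_le_div_of_nonneg_right ?_ hCf.le
      exact mul_le_mul_of_nonneg_left (hDle z hz) (by positivity)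
    · refine mul_le_mul_of_nonneg_right ?_ hc2.le
      refine div_le_div_of_nonneg_right ?_ hCf.le
      refine mul_le_mul ?_ (hDle z hz) (hDnn z hz) (by positivity)
      exact div_le_div_of_nonneg_left hγ2.le (by positivity)
        (mul_le_mul_of_nonneg_left hz.1 hβ2.le)
  have hI2nn : ∀ z ∈ Icc t 1, 0 ≤ cbI2 M β1 β2 γ1 γ2 t z := fun z hz =>
    setIntegral_nonneg measurableSet_Ioi fun y hy => (hprops z hz y hy).2.1
  -- interval integrability of cbI2
  have hii : IntervalIntegrable (fun z => cbI2 M β1 β2 γ1 γ2 t z) volume t 1 := by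
    rw [intervalIntegrable_iff_integrableOn_Ioc_of_le (by linarith : t ≤ 1)]
    refine Integrable.mono' (g := fun _ =>
        ((γ1 * (1 + γ2) + γ2) / β1 * (((M:ℝ) - 1) * 1 / (1 - t) ^ (M - 1))
          / (Nat.factorial (M - 1) : ℝ) / (Nat.factorial (M - 1) : ℝ)
          * (Nat.factorial (M - 2) : ℝ)) * (Nat.factorial (M - 1) : ℝ)
        + (γ2 / (β2 * t) * (((M:ℝ) - 1) * 1 / (1 - t) ^ (M - 1))
          / (Nat.factorial (M - 1) : ℝ)) * (Nat.factorial (M - 2) : ℝ))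
      (integrableOn_const measure_Ioc_lt_top.ne)
      (cbI2_sm M β1 β2 γ1 γ2 t).aestronglyMeasurable.restrict ?_
    refine (ae_restrict_iff' measurableSet_Ioc).mpr (ae_of_all _ fun z hz => ?_)
    have hz' : z ∈ Icc t 1 := Ioc_subset_Icc_self hz
    rw [Real.norm_eq_abs, abs_of_nonneg (hI2nn z hz')]
    exact hI2up z hz'
  -- the lower bound function L
  have hLc : ContinuousOn (fun z : ℝ =>
      γ2 * (Nat.factorial (M - 2) : ℝ) / (β2 * (Nat.factorial (M - 1) : ℝ)) * ((M:ℝ) - 1)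
        / (1 - t) ^ (M - 1) * ((1 - z) ^ (M - 2) / z)) (Icc t 1) := by
    refine continuousOn_const.mul (ContinuousOn.div ?_ continuousOn_id fun z hz => ?_)
    · exact ((continuous_const.sub continuous_id).pow _).continuousOn
    · exact ne_of_gt (lt_of_lt_of_le ht0 hz.1)
  have e1 : uIcc t 1 = Icc t 1 := uIcc_of_le (by linarith)
  have e2 : uIcc t (1/2) = Icc t (1/2) := uIcc_of_le ht2.le
  have e3 : uIcc (1/2 : ℝ) 1 = Icc (1/2 : ℝ) 1 := uIcc_of_le (by norm_num)
  have hLii : IntervalIntegrable (fun z : ℝ =>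
      γ2 * (Nat.factorial (M - 2) : ℝ) / (β2 * (Nat.factorial (M - 1) : ℝ)) * ((M:ℝ) - 1)
        / (1 - t) ^ (M - 1) * ((1 - z) ^ (M - 2) / z)) volume t 1 :=
    (e1 ▸ hLc).intervalIntegrable
  have hL12 : IntervalIntegrable (fun z : ℝ =>
      γ2 * (Nat.factorial (M - 2) : ℝ) / (β2 * (Nat.factorial (M - 1) : ℝ)) * ((M:ℝ) - 1)
        / (1 - t) ^ (M - 1) * ((1 - z) ^ (M - 2) / z)) volume t (1/2) :=
    (e2 ▸ (hLc.mono (Icc_subset_Icc_right (by norm_num)))).intervalIntegrable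
  have hL21 : IntervalIntegrable (fun z : ℝ =>
      γ2 * (Nat.factorial (M - 2) : ℝ) / (β2 * (Nat.factorial (M - 1) : ℝ)) * ((M:ℝ) - 1)
        / (1 - t) ^ (M - 1) * ((1 - z) ^ (M - 2) / z)) volume (1/2) 1 :=
    (e3 ▸ (hLc.mono (Icc_subset_Icc_left (by linarith)))).intervalIntegrable
  have hmono1 : (∫ z in t..1,
      γ2 * (Nat.factorial (M - 2) : ℝ) / (β2 * (Nat.factorial (M - 1) : ℝ)) * ((M:ℝ) - 1)
        / (1 - t) ^ (M - 1) * ((1 - z) ^ (M - 2) / z))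
      ≤ ∫ z in t..1, cbI2 M β1 β2 γ1 γ2 t z :=
    intervalIntegral.integral_mono_on (by linarith) hLii hii hI2low
  have hsplit := intervalIntegral.integral_add_adjacent_intervals hL12 hL21
  have hpos2 : 0 ≤ ∫ z in (1/2 : ℝ)..1,
      γ2 * (Nat.factorial (M - 2) : ℝ) / (β2 * (Nat.factorial (M - 1) : ℝ)) * ((M:ℝ) - 1)
        / (1 - t) ^ (M - 1) * ((1 - z) ^ (M - 2) / z) := by
    refine intervalIntegral.integral_nonneg (by norm_num) fun u hu => ?_
    refine mul_nonneg (div_nonneg (mul_nonneg (by positivity) hMR) (pow_nonneg h1t.le _)) ?_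
    exact div_nonneg (pow_nonneg (by linarith [hu.2]) _) (by linarith [hu.1])
  have hκii : IntervalIntegrable (fun z : ℝ =>
      γ2 * (Nat.factorial (M - 2) : ℝ) / (β2 * (Nat.factorial (M - 1) : ℝ)) * ((M:ℝ) - 1)
        * (1/2 : ℝ) ^ (M - 2) * (1 / z)) volume t (1/2) := by
    apply ContinuousOn.intervalIntegrable
    rw [e2]
    refine continuousOn_const.mul (ContinuousOn.div continuousOn_const continuousOn_id
      fun z hz => ne_of_gt (lt_of_lt_of_le ht0 hz.1))
  have hκle : ∀ z ∈ Icc t (1/2 : ℝ),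
      γ2 * (Nat.factorial (M - 2) : ℝ) / (β2 * (Nat.factorial (M - 1) : ℝ)) * ((M:ℝ) - 1)
        * (1/2 : ℝ) ^ (M - 2) * (1 / z)
      ≤ γ2 * (Nat.factorial (M - 2) : ℝ) / (β2 * (Nat.factorial (M - 1) : ℝ)) * ((M:ℝ) - 1)
        / (1 - t) ^ (M - 1) * ((1 - z) ^ (M - 2) / z) := by
    intro z hz
    have hz0 : 0 < z := lt_of_lt_of_le ht0 hz.1
    have hbase : (0:ℝ) ≤ γ2 * (Nat.factorial (M - 2) : ℝ)
        / (β2 * (Nat.factorial (M - 1) : ℝ)) * ((M:ℝ) - 1) :=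
      mul_nonneg (by positivity) hMR
    calc γ2 * (Nat.factorial (M - 2) : ℝ) / (β2 * (Nat.factorial (M - 1) : ℝ)) * ((M:ℝ) - 1)
          * (1/2 : ℝ) ^ (M - 2) * (1 / z)
        = γ2 * (Nat.factorial (M - 2) : ℝ) / (β2 * (Nat.factorial (M - 1) : ℝ)) * ((M:ℝ) - 1)
          * ((1/2 : ℝ) ^ (M - 2) / z) := by ring
      _ ≤ γ2 * (Nat.factorial (M - 2) : ℝ) / (β2 * (Nat.factorial (M - 1) : ℝ)) * ((M:ℝ) - 1)
          * ((1 - z) ^ (M - 2) / z) := by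
          refine mul_le_mul_of_nonneg_left ((div_le_div_iff_of_pos_right hz0).mpr ?_) hbase
          exact pow_le_pow_left₀ (by norm_num) (by linarith [hz.2]) _
      _ ≤ γ2 * (Nat.factorial (M - 2) : ℝ) / (β2 * (Nat.factorial (M - 1) : ℝ)) * ((M:ℝ) - 1)
          / (1 - t) ^ (M - 1) * ((1 - z) ^ (M - 2) / z) := by
          refine mul_le_mul_of_nonneg_right ?_
            (div_nonneg (pow_nonneg (by linarith [hz.2]) _) hz0.le)
          exact le_div_self hbase (pow_pos h1t _) (pow_le_one₀ h1t.le (by linarith))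
  have hmono2 : (∫ z in t..(1/2 : ℝ),
      γ2 * (Nat.factorial (M - 2) : ℝ) / (β2 * (Nat.factorial (M - 1) : ℝ)) * ((M:ℝ) - 1)
        * (1/2 : ℝ) ^ (M - 2) * (1 / z))
      ≤ ∫ z in t..(1/2 : ℝ),
      γ2 * (Nat.factorial (M - 2) : ℝ) / (β2 * (Nat.factorial (M - 1) : ℝ)) * ((M:ℝ) - 1)
        / (1 - t) ^ (M - 1) * ((1 - z) ^ (M - 2) / z) :=
    intervalIntegral.integral_mono_on ht2.le hκii hL12 hκle
  have hκval : (∫ z in t..(1/2 : ℝ),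
      γ2 * (Nat.factorial (M - 2) : ℝ) / (β2 * (Nat.factorial (M - 1) : ℝ)) * ((M:ℝ) - 1)
        * (1/2 : ℝ) ^ (M - 2) * (1 / z))
      = γ2 * (Nat.factorial (M - 2) : ℝ) / (β2 * (Nat.factorial (M - 1) : ℝ)) * ((M:ℝ) - 1)
        * (1/2 : ℝ) ^ (M - 2) * (Real.log (1/2) - Real.log t) := by
    rw [intervalIntegral.integral_const_mul, integral_one_div, Real.log_div (by norm_num) (ne_of_gt ht0)]
    rw [e2]
    exact fun h => absurd h.1 (not_le.mpr ht0)
  rw [← hκval]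
  linarith

/-- The conditional average minimal transmit power of CB-NOMA diverges
to `+∞` as the squared correlation threshold `t` tends to `0⁺`. -/
theorem cbnoma_avg_power_diverges (M : ℕ) (hM : 2 ≤ M)
    (β1 β2 γ1 γ2 : ℝ) (hβ : β2 ≤ β1) (hβ2 : 0 < β2)
    (hγ1 : 0 < γ1) (hγ2 : 0 < γ2) :
    Tendsto
      (fun t : ℝ =>
        ∫ z in t..1, ∫ y in Ioi (0 : ℝ), ∫ x in Ioi (0 : ℝ),
          (γ1 * (1 + γ2) / (β1 * x) + γ2 / min (β1 * x) (β2 * y * z))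
            * (x ^ (M - 1) * Real.exp (-x) / (Nat.factorial (M - 1) : ℝ))
            * (y ^ (M - 1) * Real.exp (-y) / (Nat.factorial (M - 1) : ℝ))
            * (((M : ℝ) - 1) * (1 - z) ^ (M - 2) / (1 - t) ^ (M - 1)))
      (nhdsWithin 0 (Ioi 0)) atTop := by
  have hM2 : (2:ℝ) ≤ (M:ℝ) := by exact_mod_cast hM
  have hMR : (0:ℝ) < (M:ℝ) - 1 := by linarith
  have hκ : 0 < γ2 * (Nat.factorial (M - 2) : ℝ) / (β2 * (Nat.factorial (M - 1) : ℝ))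
      * ((M:ℝ) - 1) * (1/2 : ℝ) ^ (M - 2) :=
    mul_pos (mul_pos (by positivity) hMR) (by positivity)
  refine tendsto_atTop_mono' (nhdsWithin 0 (Ioi 0))
    (f₁ := fun u : ℝ => γ2 * (Nat.factorial (M - 2) : ℝ)
      / (β2 * (Nat.factorial (M - 1) : ℝ)) * ((M:ℝ) - 1) * (1/2 : ℝ) ^ (M - 2)
      * (Real.log (1/2) - Real.log u)) ?_ ?_
  · filter_upwards [Ioo_mem_nhdsGT_of_mem
      (show (0:ℝ) ∈ Ico (0:ℝ) (1/2) from ⟨le_refl _, by norm_num⟩)] with u hu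
    exact cbnoma_key M hM β1 β2 γ1 γ2 u hβ hβ2 hγ1 hγ2 hu.1 hu.2
  · have h1 : Tendsto (fun u : ℝ => -Real.log u) (nhdsWithin 0 (Ioi 0)) atTop :=
      tendsto_neg_atBot_atTop.comp Real.tendsto_log_nhdsGT_zero
    have h2 : Tendsto (fun u : ℝ => Real.log (1/2) - Real.log u)
        (nhdsWithin 0 (Ioi 0)) atTop := by
      simpa [sub_eq_add_neg] using tendsto_atTop_add_const_left _ (Real.log (1/2)) h1
    exact h2.const_mul_atTop hκ
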